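/- Let d ≥ 1, let D be an invertible d×d integer matrix, let B be an invertible real d×d matrix, let p : ℤ^d → ℂ be absolutely summable, and let Φ : ℝ^d → ℂ be Lebesgue integrable such that for almost every ω ∈ ℝ^d the periodization ∑_{n∈ℤ^d} Φ(ω + 2π(B^T)^{−1}n) converges absolutely to a constant c independent of ω. Then for every k ∈ ℤ^d with k ∉ Dℤ^d, ∫_{ℝ^d} (∑_{n∈ℤ^d} p(n) e^{i ω·(BDn)}) e^{i ω·(Bk)} Φ(ω) dω = 0. -/

import Mathlib

open Matrix Real MeasureTheory

open Submodule Set in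
lemma aux_key (d : ℕ) (B : Matrix (Fin d) (Fin d) ℝ) (hB : IsUnit B.det)
    (Φ : (Fin d → ℝ) → ℂ) (hΦ : Integrable Φ)
    (c : ℂ)
    (hper : ∀ᵐ ω : Fin d → ℝ ∂volume,
      (Summable fun n : Fin d → ℤ =>
        ‖Φ (ω + (2 * π) • (B.transpose)⁻¹.mulVec (fun i => (n i : ℝ)))‖) ∧
      (∑' n : Fin d → ℤ,
        Φ (ω + (2 * π) • (B.transpose)⁻¹.mulVec (fun i => (n i : ℝ)))) = c)
    (m : Fin d → ℤ) (hm : m ≠ 0) :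
    ∫ ω : Fin d → ℝ,
      Complex.exp (Complex.I * ((ω ⬝ᵥ B.mulVec (fun i => (m i : ℝ)) : ℝ) : ℂ)) * Φ ω = 0 := by
  classical
  set A : Matrix (Fin d) (Fin d) ℝ := (2 * π) • (B.transpose)⁻¹ with hA
  have hAdet : IsUnit A.det := by
    rw [hA, Matrix.det_smul, Matrix.det_nonsing_inv, Matrix.det_transpose]
    exact ((by positivity : (0:ℝ) < 2 * π).ne'.isUnit.pow _).mul hB.ringInverse
  have hAinv : Invertible A := A.invertibleOfIsUnitDet hAdet
  -- the key dot product identity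
  have hdot : ∀ x y : Fin d → ℝ, (A.mulVec x) ⬝ᵥ (B.mulVec y) = (2 * π) * (x ⬝ᵥ y) := by
    intro x y
    rw [hA, Matrix.dotProduct_mulVec, ← Matrix.mulVec_transpose, Matrix.mulVec_mulVec,
      Matrix.mul_smul, Matrix.mul_nonsing_inv _ (by rwa [Matrix.det_transpose]),
      Matrix.smul_mulVec, Matrix.one_mulVec, smul_dotProduct, smul_eq_mul]
  set e : (Fin d → ℝ) ≃ₗ[ℝ] (Fin d → ℝ) := A.toLinearEquiv' hAinv with he
  have he_apply : ∀ v, e v = A.mulVec v := fun v => by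
    simp [he, Matrix.toLinearEquiv', Matrix.toLin'_apply]
  set b : Module.Basis (Fin d) ℝ (Fin d → ℝ) := (Pi.basisFun ℝ (Fin d)).map e with hb
  have hb_repr : ∀ (x : Fin d → ℝ) (i : Fin d), b.repr x i = e.symm x i := fun x i => by
    rw [hb, Module.Basis.map_repr]; simp [Pi.basisFun_repr]
  set Λ := (span ℤ (Set.range b)).toAddSubgroup with hΛ
  set u : (Fin d → ℤ) → (Fin d → ℝ) := fun n => A.mulVec (fun i => (n i : ℝ)) with hu
  have hue : ∀ n, u n = e (fun i => (n i : ℝ)) := fun n => (he_apply _).symm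
  have hmem : ∀ n : Fin d → ℤ, u n ∈ Λ := by
    intro n
    rw [hΛ, Submodule.mem_toAddSubgroup, Module.Basis.mem_span_iff_repr_mem]
    intro i
    exact ⟨n i, by rw [hb_repr, hue, LinearEquiv.symm_apply_apply]; rfl⟩
  have hbij : Function.Bijective (fun n : Fin d → ℤ => (⟨u n, hmem n⟩ : Λ)) := by
    constructor
    · intro n m hnm
      have h1 : u n = u m := congrArg Subtype.val hnm
      rw [hue, hue] at h1
      have h2 := e.injective h1
      funext i
      exact_mod_cast congrFun h2 i
    · rintro ⟨x, hx⟩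
      rw [hΛ, Submodule.mem_toAddSubgroup, Module.Basis.mem_span_iff_repr_mem] at hx
      choose n hn using hx
      refine ⟨n, Subtype.ext ?_⟩
      have hcast : (fun i => (n i : ℝ)) = e.symm x := by
        funext i
        rw [← hb_repr x i, ← hn i]; rfl
      show u n = x
      rw [hue, hcast, e.apply_symm_apply]
  set ψ : (Fin d → ℤ) ≃ Λ := Equiv.ofBijective _ hbij with hψ
  haveI : Countable Λ := ψ.symm.injective.countable
  -- the character
  set w : Fin d → ℝ := B.mulVec (fun i => (m i : ℝ)) with hw
  set g : (Fin d → ℝ) → ℂ := fun ω => Complex.exp (Complex.I * ((ω ⬝ᵥ w : ℝ) : ℂ)) with hg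
  have hg_norm : ∀ x, ‖g x‖ = 1 := by
    intro x
    simp [hg, Complex.norm_exp, Complex.mul_re]
  have hg_cont : Continuous g := by
    have hdotc : Continuous (fun ω : Fin d → ℝ => ω ⬝ᵥ w) := by
      simp only [dotProduct]
      exact continuous_finset_sum _ fun i _ => (continuous_apply i).mul continuous_const
    exact Complex.continuous_exp.comp (continuous_const.mul
      (Complex.continuous_ofReal.comp hdotc))
  -- periodicity of the character
  have hg_per : ∀ (n : Fin d → ℤ) (x : Fin d → ℝ), g (u n + x) = g x := by
    intro n x
    have hd1 : (u n + x) ⬝ᵥ w = 2 * π * ((n ⬝ᵥ m : ℤ) : ℝ) + x ⬝ᵥ w := by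
      rw [add_dotProduct, hu, hw, hdot]
      congr 2
      simp [dotProduct]
    rw [hg]
    simp only [hd1]
    push_cast
    rw [mul_add, Complex.exp_add,
      show Complex.I * (2 * π * ((n ⬝ᵥ m : ℤ) : ℂ)) = ((n ⬝ᵥ m : ℤ) : ℂ) * (2 * π * Complex.I) by
        push_cast; ring,
      Complex.exp_int_mul_two_pi_mul_I, one_mul]
  -- integrability
  have hgΦ : Integrable (fun ω => g ω * Φ ω) :=
    hΦ.bdd_mul (c := 1) hg_cont.aestronglyMeasurable (Filter.Eventually.of_forall fun x => le_of_eq (hg_norm x))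
  set F := ZSpan.fundamentalDomain b with hF
  have hFnd : IsAddFundamentalDomain Λ F volume := ZSpan.isAddFundamentalDomain' b volume
  have hvadd : ∀ (v : Λ) (x : Fin d → ℝ), v +ᵥ x = ↑v + x := fun v x => rfl
  -- step 1 : fold
  have step1 : (∫ ω, g ω * Φ ω) = ∑' (v : Λ), ∫ x in F, g (↑v + x) * Φ (↑v + x) := by
    simpa only [hvadd] using hFnd.integral_eq_tsum'' _ hgΦ
  -- step 2 : reindex by ℤ^d and use periodicity
  have step2 : (∑' (v : Λ), ∫ x in F, g (↑v + x) * Φ (↑v + x))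
      = ∑' (n : Fin d → ℤ), ∫ x in F, g x * Φ (u n + x) := by
    rw [← ψ.tsum_eq]
    refine tsum_congr fun n => ?_
    have hcoe : ((ψ n : Λ) : Fin d → ℝ) = u n := rfl
    simp only [hcoe]
    exact setIntegral_congr_fun (ZSpan.fundamentalDomain_measurableSet b)
      (fun x _ => by rw [hg_per n x])
  -- nnnorm of the character is 1
  have hg_nn : ∀ x : Fin d → ℝ, (‖g x‖₊ : ENNReal) = 1 := by
    intro x
    have : ‖g x‖₊ = 1 := by ext; exact hg_norm x
    rw [this]; rfl
  -- the total mass identity for the folded norms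
  have hmass : (∑' (n : Fin d → ℤ), ∫⁻ x in F, ‖Φ (u n + x)‖₊ ∂volume)
      = ∫⁻ x, ‖Φ x‖₊ ∂volume := by
    rw [hFnd.lintegral_eq_tsum'' (fun x => ‖Φ x‖₊), ← ψ.tsum_eq]
    rfl
  -- step 3 : swap sum and integral
  have step3 : (∑' (n : Fin d → ℤ), ∫ x in F, g x * Φ (u n + x))
      = ∫ x in F, ∑' (n : Fin d → ℤ), g x * Φ (u n + x) := by
    refine (integral_tsum (fun n => ?_) ?_).symm
    · exact (hg_cont.aestronglyMeasurable.mul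
        (hΦ.1.comp_quasiMeasurePreserving
          (measurePreserving_add_left volume (u n)).quasiMeasurePreserving)).restrict
    · have heq : ∀ n : Fin d → ℤ, (∫⁻ x in F, ‖g x * Φ (u n + x)‖₊ ∂volume)
          = ∫⁻ x in F, ‖Φ (u n + x)‖₊ ∂volume := by
        intro n
        refine lintegral_congr fun x => ?_
        rw [nnnorm_mul, ENNReal.coe_mul, hg_nn, one_mul]
      simp only [enorm_eq_nnnorm, heq, hmass]
      exact hΦ.2.ne
  -- rewriting translation
  have hux : ∀ (n : Fin d → ℤ) (x : Fin d → ℝ),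
      u n + x = x + (2 * π) • (B.transpose)⁻¹.mulVec (fun i => (n i : ℝ)) := by
    intro n x
    show ((2 * π) • (B.transpose)⁻¹).mulVec (fun i => (n i : ℝ)) + x = _
    rw [Matrix.smul_mulVec, add_comm]
  -- step 4 : a.e. constant periodization
  have step4 : (∫ x in F, ∑' (n : Fin d → ℤ), g x * Φ (u n + x))
      = ∫ x in F, c * g x := by
    refine integral_congr_ae ?_
    filter_upwards [ae_restrict_of_ae hper] with x hx
    have : (∑' (n : Fin d → ℤ), g x * Φ (u n + x))
        = g x * ∑' (n : Fin d → ℤ), Φ (u n + x) := tsum_mul_left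
    rw [this]
    have h2 : (∑' (n : Fin d → ℤ), Φ (u n + x)) = c := by
      rw [show (fun n : Fin d → ℤ => Φ (u n + x))
        = fun n => Φ (x + (2 * π) • (B.transpose)⁻¹.mulVec (fun i => (n i : ℝ))) by
          funext n; rw [hux]]
      exact hx.2
    rw [h2, mul_comm]
  -- step 5 : pull out the constant
  have step5 : (∫ x in F, c * g x) = c * ∫ x in F, g x := by
    simpa using integral_smul c g (μ := volume.restrict F)
  -- step 6 : the character integrates to 0 over F
  have step6 : (∫ x in F, g x) = 0 := by
    obtain ⟨j, hj0⟩ := Function.ne_iff.mp hm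
    have hj : m j ≠ 0 := by simpa using hj0
    set u₀ : Fin d → ℝ := A.mulVec ((2 * (m j : ℝ))⁻¹ • (Pi.single j (1:ℝ) : Fin d → ℝ)) with hu₀def
    have hmj : (m j : ℝ) ≠ 0 := Int.cast_ne_zero.mpr hj
    have hdot0 : u₀ ⬝ᵥ w = π := by
      rw [hu₀def, hw, hdot, smul_dotProduct, smul_eq_mul]
      have : (Pi.single j (1:ℝ)) ⬝ᵥ (fun i => (m i : ℝ)) = (m j : ℝ) := by
        simp [dotProduct, Pi.single_apply]
      rw [this]
      field_simp
    have hg_flip : ∀ x, g (u₀ + x) = - g x := by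
      intro x
      rw [hg]
      simp only [add_dotProduct, hdot0]
      push_cast
      rw [mul_add, Complex.exp_add, mul_comm Complex.I (π : ℂ), Complex.exp_pi_mul_I]
      ring
    have hF' : IsAddFundamentalDomain Λ ((Equiv.addLeft u₀) '' F) volume := by
      refine hFnd.image_of_equiv (Equiv.addLeft u₀) ?_ (Equiv.refl Λ) ?_
      · rw [Equiv.addLeft_symm]
        exact (measurePreserving_add_left volume (-u₀)).quasiMeasurePreserving
      · intro v x
        show u₀ + (v +ᵥ x) = v +ᵥ (u₀ + x)
        rw [hvadd, hvadd, add_left_comm]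
    have hperiod : ∀ (v : Λ) (x : Fin d → ℝ), g (v +ᵥ x) = g x := by
      intro v x
      obtain ⟨n, rfl⟩ := ψ.surjective v
      rw [hvadd]
      exact hg_per n x
    have hset : (∫ x in F, g x) = ∫ x in (Equiv.addLeft u₀) '' F, g x :=
      hFnd.setIntegral_eq hF' hperiod
    have htrans : (∫ x in (Equiv.addLeft u₀) '' F, g x) = ∫ x in F, g (u₀ + x) := by
      have h1 : MeasurePreserving (fun x : Fin d → ℝ => u₀ + x) volume volume :=
        measurePreserving_add_left volume u₀
      have h2 : MeasurableEmbedding (fun x : Fin d → ℝ => u₀ + x) :=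
        (MeasurableEquiv.addLeft u₀).measurableEmbedding
      exact h1.setIntegral_image_emb h2 g F
    have hneg : (∫ x in F, g (u₀ + x)) = - ∫ x in F, g x := by
      simp_rw [hg_flip]
      exact integral_neg g
    have hrec : (∫ x in F, g x) = - ∫ x in F, g x := hset.trans (htrans.trans hneg)
    linear_combination hrec / 2
  rw [show (fun ω : Fin d → ℝ =>
        Complex.exp (Complex.I * ((ω ⬝ᵥ B.mulVec (fun i => (m i : ℝ)) : ℝ) : ℂ)) * Φ ω)
      = fun ω => g ω * Φ ω by funext ω; rw [hg, hw]]
  rw [step1, step2, step3, step4, step5, step6, mul_zero]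

/-- Let `d ≥ 1`, `D` an invertible integer `d×d` matrix, `B` an invertible
real `d×d` matrix, `p : ℤ^d → ℂ` absolutely summable, and `Φ : ℝ^d → ℂ` integrable such
that for almost every `ω` the periodization `∑_{n∈ℤ^d} Φ(ω + 2π(Bᵀ)⁻¹n)` converges
absolutely to a constant `c` independent of `ω`. Then for every `k ∈ ℤ^d` with `k ∉ Dℤ^d`,
`∫ (∑_n p n e^{iω·(BDn)}) e^{iω·(Bk)} Φ(ω) dω = 0`. -/
theorem stmt_13 (d : ℕ) (hd : 1 ≤ d)
    (D : Matrix (Fin d) (Fin d) ℤ) (hD : D.det ≠ 0)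
    (B : Matrix (Fin d) (Fin d) ℝ) (hB : IsUnit B.det)
    (p : (Fin d → ℤ) → ℂ) (hp : Summable fun n => ‖p n‖)
    (Φ : (Fin d → ℝ) → ℂ) (hΦ : Integrable Φ)
    (c : ℂ)
    (hper : ∀ᵐ ω : Fin d → ℝ ∂volume,
      (Summable fun n : Fin d → ℤ =>
        ‖Φ (ω + (2 * π) • (B.transpose)⁻¹.mulVec (fun i => (n i : ℝ)))‖) ∧
      (∑' n : Fin d → ℤ,
        Φ (ω + (2 * π) • (B.transpose)⁻¹.mulVec (fun i => (n i : ℝ)))) = c) :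
    ∀ k : Fin d → ℤ, (¬ ∃ m : Fin d → ℤ, D.mulVec m = k) →
      (∫ ω : Fin d → ℝ,
        (∑' n : Fin d → ℤ,
          p n * Complex.exp (Complex.I *
            ((ω ⬝ᵥ B.mulVec (fun i => ((D.mulVec n) i : ℝ)) : ℝ) : ℂ))) *
        Complex.exp (Complex.I * ((ω ⬝ᵥ B.mulVec (fun i => (k i : ℝ)) : ℝ) : ℂ)) *
        Φ ω) = 0 := by

  intro k hk
  -- the shifted frequency is never 0
  have hq : ∀ n : Fin d → ℤ, D.mulVec n + k ≠ 0 := by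
    intro n h
    exact hk ⟨-n, by rw [Matrix.mulVec_neg, neg_eq_iff_add_eq_zero, add_comm]; exact (add_comm (D.mulVec n) k) ▸ h⟩
  -- pointwise rewriting of the integrand
  have hpt : ∀ ω : Fin d → ℝ,
      (∑' n : Fin d → ℤ,
          p n * Complex.exp (Complex.I *
            ((ω ⬝ᵥ B.mulVec (fun i => ((D.mulVec n) i : ℝ)) : ℝ) : ℂ))) *
        Complex.exp (Complex.I * ((ω ⬝ᵥ B.mulVec (fun i => (k i : ℝ)) : ℝ) : ℂ)) * Φ ω
      = ∑' n : Fin d → ℤ, p n *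
          (Complex.exp (Complex.I *
            ((ω ⬝ᵥ B.mulVec (fun i => ((D.mulVec n + k) i : ℝ)) : ℝ) : ℂ)) * Φ ω) := by
    intro ω
    rw [← tsum_mul_right, ← tsum_mul_right]
    refine tsum_congr fun n => ?_
    have hsplit : (fun i => ((D.mulVec n + k) i : ℝ))
        = (fun i => ((D.mulVec n) i : ℝ)) + (fun i => (k i : ℝ)) := by
      funext i; simp
    rw [hsplit, Matrix.mulVec_add, dotProduct_add]
    push_cast
    rw [mul_add, Complex.exp_add]
    ring
  simp_rw [hpt]
  -- swap sum and integral
  have hmeas : ∀ n : Fin d → ℤ, AEStronglyMeasurable (fun ω : Fin d → ℝ =>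
      p n * (Complex.exp (Complex.I *
        ((ω ⬝ᵥ B.mulVec (fun i => ((D.mulVec n + k) i : ℝ)) : ℝ) : ℂ)) * Φ ω)) volume := by
    intro n
    have hc : Continuous (fun ω : Fin d → ℝ => Complex.exp (Complex.I *
        ((ω ⬝ᵥ B.mulVec (fun i => ((D.mulVec n + k) i : ℝ)) : ℝ) : ℂ))) := by
      have hdotc : Continuous (fun ω : Fin d → ℝ =>
          ω ⬝ᵥ B.mulVec (fun i => ((D.mulVec n + k) i : ℝ))) := by
        simp only [dotProduct]
        exact continuous_finset_sum _ fun i _ => (continuous_apply i).mul continuous_const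
      exact Complex.continuous_exp.comp (continuous_const.mul
        (Complex.continuous_ofReal.comp hdotc))
    exact ((hc.aestronglyMeasurable.mul hΦ.1).const_mul (p n))
  have hnn : ∀ (n : Fin d → ℤ) (ω : Fin d → ℝ),
      (‖p n * (Complex.exp (Complex.I *
        ((ω ⬝ᵥ B.mulVec (fun i => ((D.mulVec n + k) i : ℝ)) : ℝ) : ℂ)) * Φ ω)‖₊ : ENNReal)
      = (‖p n‖₊ : ENNReal) * ‖Φ ω‖₊ := by
    intro n ω
    have h1 : ‖Complex.exp (Complex.I *
        ((ω ⬝ᵥ B.mulVec (fun i => ((D.mulVec n + k) i : ℝ)) : ℝ) : ℂ))‖₊ = 1 := by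
      ext
      simp [Complex.norm_exp, Complex.mul_re]
    rw [nnnorm_mul, nnnorm_mul, h1, one_mul, ENNReal.coe_mul]
  have hsum_nn : Summable (fun n : Fin d → ℤ => ‖p n‖₊) :=
    NNReal.summable_coe.mp (by simpa using hp)
  have hfin : (∑' n : Fin d → ℤ, ∫⁻ ω, ‖p n * (Complex.exp (Complex.I *
      ((ω ⬝ᵥ B.mulVec (fun i => ((D.mulVec n + k) i : ℝ)) : ℝ) : ℂ)) * Φ ω)‖₊ ∂volume) ≠ ⊤ := by
    have : ∀ n : Fin d → ℤ, (∫⁻ ω, ‖p n * (Complex.exp (Complex.I *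
        ((ω ⬝ᵥ B.mulVec (fun i => ((D.mulVec n + k) i : ℝ)) : ℝ) : ℂ)) * Φ ω)‖₊ ∂volume)
        = (‖p n‖₊ : ENNReal) * ∫⁻ ω, ‖Φ ω‖₊ ∂volume := by
      intro n
      rw [← lintegral_const_mul' _ _ ENNReal.coe_ne_top]
      exact lintegral_congr fun ω => hnn n ω
    simp only [this]
    rw [ENNReal.tsum_mul_right]
    exact ENNReal.mul_ne_top (ENNReal.tsum_coe_ne_top_iff_summable.mpr hsum_nn) hΦ.2.ne
  rw [integral_tsum hmeas hfin]
  have hzero : ∀ n : Fin d → ℤ, (∫ ω : Fin d → ℝ, p n * (Complex.exp (Complex.I *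
      ((ω ⬝ᵥ B.mulVec (fun i => ((D.mulVec n + k) i : ℝ)) : ℝ) : ℂ)) * Φ ω)) = 0 := by
    intro n
    rw [MeasureTheory.integral_const_mul]
    rw [aux_key d B hB Φ hΦ c hper (D.mulVec n + k) (hq n), mul_zero]
  simp only [hzero]
  exact tsum_zero
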